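/- For a normalized nondegenerate C² speed f with c := f_x(0,1) > 0, the function w(r) = r - (c-ε)/r is a super-solution of f(w'/(1+w²), w/r) = 1 for each ε ∈ (0,c) and all sufficiently large r, i.e. f(w'/(1+w²), w/r) ≥ 1 for large r. -/

import Mathlib

open Filter Topology

set_option maxHeartbeats 1000000

/-- w(r) = r - (c-ε)/r is a super-solution of f(w'/(1+w²), w/r) = 1 for large r. -/
theorem stmt7 (f : ℝ × ℝ → ℝ)
    (hf : ContDiff ℝ 2 f)
    (hhom : ∀ c : ℝ, 0 < c → ∀ x y : ℝ, f (c * x, c * y) = c * f (x, y))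
    (hfx : ∀ p : ℝ × ℝ, 0 < deriv (fun t => f (t, p.2)) p.1)
    (hfy : ∀ p : ℝ × ℝ, 0 < deriv (fun t => f (p.1, t)) p.2)
    (hnorm : f (0, 1) = 1)
    (c : ℝ) (hc : c = deriv (fun t => f (t, 1)) 0) (hcpos : 0 < c) :
    ∀ ε : ℝ, 0 < ε → ε < c → ∀ᶠ r in atTop,
      1 ≤ f ((1 + (c - ε) / r ^ 2) / (1 + (r - (c - ε) / r) ^ 2),
             (r - (c - ε) / r) / r) := by
  intro ε hε hεc
  set k := c - ε with hkdef
  have hk : 0 < k := by simp only [hkdef]; linarith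
  -- derivative of t ↦ f (t, 1) at 0
  have hg : DifferentiableAt ℝ (fun t : ℝ => f (t, 1)) 0 := by
    have h1 : DifferentiableAt ℝ (fun t : ℝ => ((t, 1) : ℝ × ℝ)) 0 :=
      differentiableAt_id.prodMk (differentiableAt_const 1)
    exact ((hf.differentiable (by norm_num)) (0, 1)).comp 0 h1
  have hgd : HasDerivAt (fun t : ℝ => f (t, 1)) c 0 := by
    rw [hc]; exact hg.hasDerivAt
  have hlo := (hasDerivAt_iff_isLittleO.mp hgd).def (show (0:ℝ) < ε/2 by positivity)
  -- tendsto facts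
  have hq0 : Tendsto (fun r : ℝ => k / r ^ 2) atTop (𝓝 0) :=
    tendsto_const_nhds.div_atTop (tendsto_pow_atTop two_ne_zero)
  have hnum : Tendsto (fun r : ℝ => 1 + k / r ^ 2) atTop (𝓝 1) := by
    simpa using tendsto_const_nhds.add hq0
  have hsub : Tendsto (fun r : ℝ => r - k / r) atTop atTop := by
    have hkr0 : Tendsto (fun r : ℝ => k / r) atTop (𝓝 0) :=
      tendsto_const_nhds.div_atTop tendsto_id
    have hev : ∀ᶠ r : ℝ in atTop, (-1 : ℝ) ≤ -(k / r) := by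
      filter_upwards [hkr0.eventually (eventually_le_nhds one_pos)] with r hr
      linarith
    simpa [sub_eq_add_neg] using tendsto_atTop_add_right_of_le' atTop (-1 : ℝ) tendsto_id hev
  have hden : Tendsto (fun r : ℝ => 1 + (r - k / r) ^ 2) atTop atTop := by
    have h2 : Tendsto (fun r : ℝ => (r - k / r) ^ 2) atTop atTop := by
      simpa [sq] using hsub.atTop_mul_atTop₀ hsub
    exact tendsto_atTop_add_const_left _ 1 h2
  have hA : Tendsto (fun r : ℝ => (1 + k / r ^ 2) / (1 + (r - k / r) ^ 2)) atTop (𝓝 0) :=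
    hnum.div_atTop hden
  have hB : Tendsto (fun r : ℝ => (r - k / r) / r) atTop (𝓝 1) := by
    have heq : (fun r : ℝ => 1 - k / r ^ 2) =ᶠ[atTop] fun r : ℝ => (r - k / r) / r := by
      filter_upwards [eventually_gt_atTop 0] with r hr
      field_simp
    have : Tendsto (fun r : ℝ => 1 - k / r ^ 2) atTop (𝓝 1) := by
      simpa using tendsto_const_nhds.sub hq0
    exact this.congr' heq
  have hT : Tendsto (fun r : ℝ =>
      ((1 + k / r ^ 2) / (1 + (r - k / r) ^ 2)) / ((r - k / r) / r)) atTop (𝓝 0) := by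
    have := hA.div hB one_ne_zero; rw [zero_div] at this; exact this
  have hEv := hT.eventually hlo
  filter_upwards [eventually_ge_atTop 1, eventually_ge_atTop (k + 1),
    eventually_ge_atTop (2 * (k + k ^ 3) / ε), hEv] with r h1 h2 h3 h4
  have hr0 : (0:ℝ) < r := lt_of_lt_of_le one_pos h1
  set A := (1 + k / r ^ 2) / (1 + (r - k / r) ^ 2) with hAdef
  set B := (r - k / r) / r with hBdef
  have hkr : k / r ≤ k := div_le_self hk.le h1
  have hBpos : 0 < B := by
    apply div_pos _ hr0
    linarith
  have hApos : 0 < A := by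
    apply div_pos
    · have : 0 < k / r ^ 2 := div_pos hk (by positivity)
      linarith
    · positivity
  set t := A / B with htdef
  have htpos : 0 < t := div_pos hApos hBpos
  have hBt : B * t = A := by
    rw [htdef]; field_simp
  have hfeq : f (A, B) = B * f (t, 1) := by
    have := hhom B hBpos t 1
    rw [hBt, mul_one] at this
    exact this
  rw [hfeq]
  -- the Taylor bound
  have h4' : |f (t, 1) - 1 - t * c| ≤ ε / 2 * t := by
    have := h4
    simp only [sub_zero, smul_eq_mul, Real.norm_eq_abs, hnorm] at this
    rwa [abs_of_pos htpos] at this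
  have hflb : 1 + t * c - ε / 2 * t ≤ f (t, 1) := by
    have := (abs_le.mp h4').1
    linarith
  -- key algebraic inequality : 1 - B ≤ (c - ε/2) * A
  have hBval : B = 1 - k / r ^ 2 := by
    rw [hBdef]; field_simp
  have hrr : r ≤ r ^ 2 := by nlinarith
  set q := k / r ^ 2 with hqdef
  have hqpos : 0 < q := div_pos hk (by positivity)
  have hqr2 : q * r ^ 2 = k := by rw [hqdef]; field_simp
  have hq1 : q ≤ k := by
    rw [hqdef]
    calc k / r ^ 2 ≤ k / 1 := by
          apply div_le_div_of_nonneg_left hk.le one_pos; nlinarith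
      _ = k := div_one k
  have hq3 : q * r ≤ k := by
    have : q * r ≤ q * r ^ 2 := by nlinarith
    linarith [hqr2 ▸ this]
  have hεr : 2 * (k + k ^ 3) ≤ ε * r := by
    rw [div_le_iff₀ hε] at h3
    linarith
  have hcore : q + k * q ^ 2 ≤ ε / 2 := by
    nlinarith [mul_pos hqpos hr0, mul_nonneg (mul_nonneg hk.le hqpos.le) hqpos.le,
      mul_le_mul_of_nonneg_left hq3 (mul_nonneg hk.le hqpos.le)]
  have hkey : 1 - B ≤ (c - ε / 2) * A := by
    rw [hBval, hAdef]
    have hD : (0:ℝ) < 1 + (r - k / r) ^ 2 := by positivity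
    have e1 : (r - k / r) ^ 2 = r ^ 2 - 2 * k + k * q := by
      rw [hqdef]; field_simp; ring
    have hgoal : q * (1 + (r - k / r) ^ 2) ≤ (c - ε / 2) * (1 + q) := by
      rw [e1]
      have hc2 : c - ε / 2 = k + ε / 2 := by rw [hkdef]; ring
      rw [hc2]
      have expand : q * (1 + (r ^ 2 - 2 * k + k * q)) = q + k - 2 * k * q + k * q ^ 2 := by
        nlinarith [hqr2]
      rw [expand]
      nlinarith [mul_nonneg hk.le hqpos.le, mul_nonneg hε.le hqpos.le]
    calc (1 : ℝ) - (1 - q) = q := by ring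
      _ ≤ (c - ε / 2) * ((1 + q) / (1 + (r - k / r) ^ 2)) := by
          rw [mul_div_assoc'] at *
          rw [le_div_iff₀ hD]
          linarith [hgoal]
  -- conclude
  clear_value t
  clear_value A B
  have hexp : B * (1 + t * c - ε / 2 * t) = B + (c - ε / 2) * (B * t) := by ring
  rw [hBt] at hexp
  have hmul := mul_le_mul_of_nonneg_left hflb hBpos.le
  linarith
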